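/- One-step sensitivity recursion for gradient descent on convex smooth losses: Let f_1,...,f_n and f_1',...,f_n' be two collections of differentiable functions from ℝ^d to ℝ with f_i = f_i' for all i ≠ n, where every function in both collections is convex, β-smooth, and L-Lipschitz. Let F(w) = (1/n)∑_i f_i(w) and F'(w) = (1/n)∑_i f_i'(w). Fix a step size η with 0 < η ≤ 1/β, and suppose w' = w − η∇F(w) and v' = v − η∇F'(v) for two points w, v ∈ ℝ^d. Then ‖w' − v'‖² ≤ ‖w − v‖² + (4ηL/n)‖w − v‖ + 8η²L²/n². -/

import Mathlib

open Real MeasureTheory RealInnerProductSpace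

lemma aux_le_limit (a b C : ℝ) (hC : 0 ≤ C)
    (h : ∀ t : ℝ, 0 < t → t ≤ 1 → a ≤ b + C * t) : a ≤ b := by
  by_contra hcon
  push_neg at hcon
  set ε := a - b with hε
  have hεpos : 0 < ε := by simp [hε]; linarith
  have ht : 0 < min 1 (ε / (2 * (C + 1))) := by positivity
  have := h _ ht (min_le_left _ _)
  have h2 : C * min 1 (ε / (2 * (C + 1))) ≤ C * (ε / (2 * (C + 1))) :=
    mul_le_mul_of_nonneg_left (min_le_right _ _) hC
  have h3 : C * (ε / (2 * (C + 1))) < ε := by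
    rw [mul_div_assoc']
    rw [div_lt_iff₀ (by linarith)]
    nlinarith
  linarith

lemma aux_convex_grad {E : Type*} [NormedAddCommGroup E] [InnerProductSpace ℝ E]
    {g : E → ℝ} {G : E → E} {β : ℝ} (hβ : 0 ≤ β)
    (hc : ConvexOn ℝ Set.univ g)
    (hs : ∀ u v, |g u - g v - ⟪G v, u - v⟫| ≤ β / 2 * ‖u - v‖ ^ 2)
    (u v : E) : g v + ⟪G v, u - v⟫ ≤ g u := by
  have key : ∀ t : ℝ, 0 < t → t ≤ 1 →
      g v + ⟪G v, u - v⟫ ≤ g u + (β / 2 * ‖u - v‖ ^ 2) * t := by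
    intro t ht ht1
    have hcv := hc.2 (Set.mem_univ v) (Set.mem_univ u)
      (by linarith : (0:ℝ) ≤ 1 - t) ht.le (by ring)
    have hsv := hs ((1 - t) • v + t • u) v
    have hd : ((1 - t) • v + t • u) - v = t • (u - v) := by module
    rw [hd, real_inner_smul_right] at hsv
    have hn : ‖t • (u - v)‖ ^ 2 = t ^ 2 * ‖u - v‖ ^ 2 := by
      rw [norm_smul, mul_pow, Real.norm_eq_abs, sq_abs]
    rw [hn] at hsv
    have h1 := (abs_le.mp hsv).1
    simp only [smul_eq_mul] at hcv
    have h2 : ⟪G v, u - v⟫ ≤ (g u - g v) + β / 2 * ‖u - v‖ ^ 2 * t := by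
      by_contra hcon
      push_neg at hcon
      have := mul_lt_mul_of_pos_left hcon ht
      nlinarith
    linarith
  exact aux_le_limit _ _ _ (by positivity) key

lemma aux_grad_norm {E : Type*} [NormedAddCommGroup E] [InnerProductSpace ℝ E]
    {g : E → ℝ} {G : E → E} {β L : ℝ} (hβ : 0 ≤ β) (hL : 0 ≤ L)
    (hs : ∀ u v, |g u - g v - ⟪G v, u - v⟫| ≤ β / 2 * ‖u - v‖ ^ 2)
    (hl : ∀ u v, |g u - g v| ≤ L * ‖u - v‖) (v : E) : ‖G v‖ ≤ L := by
  rcases eq_or_ne (G v) 0 with h | h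
  · simpa [h] using hL
  have hG : 0 < ‖G v‖ := norm_pos_iff.mpr h
  apply aux_le_limit _ _ (β / 2 * ‖G v‖) (by positivity)
  intro t ht ht1
  have hd : (v + t • G v) - v = t • G v := by module
  have hsv := hs (v + t • G v) v
  rw [hd, real_inner_smul_right, real_inner_self_eq_norm_sq] at hsv
  have hlv := hl (v + t • G v) v
  rw [hd] at hlv
  have hn : ‖t • G v‖ = t * ‖G v‖ := by
    rw [norm_smul, Real.norm_eq_abs, abs_of_pos ht]
  rw [hn] at hsv hlv
  have h1 := (abs_le.mp hsv).1
  have h2 := (abs_le.mp hlv).2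
  have h3 := (abs_le.mp hlv).1
  have key : t * ‖G v‖ * ‖G v‖ ≤ t * ‖G v‖ * (L + β / 2 * ‖G v‖ * t) := by nlinarith
  have := le_of_mul_le_mul_left (by nlinarith : (t * ‖G v‖) * ‖G v‖ ≤ (t * ‖G v‖) * (L + β / 2 * ‖G v‖ * t)) (mul_pos ht hG)
  linarith

lemma aux_coco_half {E : Type*} [NormedAddCommGroup E] [InnerProductSpace ℝ E]
    {g : E → ℝ} {G : E → E} {β : ℝ} (hβ : 0 < β)
    (hs : ∀ u v, |g u - g v - ⟪G v, u - v⟫| ≤ β / 2 * ‖u - v‖ ^ 2)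
    (hcg : ∀ u v, g v + ⟪G v, u - v⟫ ≤ g u)
    (u v : E) :
    g v + ⟪G v, u - v⟫ + 1 / (2 * β) * ‖G u - G v‖ ^ 2 ≤ g u := by
  set z := u - β⁻¹ • (G u - G v) with hzdef
  have h1 := hcg z v
  have h2 := (abs_le.mp (hs z u)).2
  have hzu : z - u = -(β⁻¹ • (G u - G v)) := by rw [hzdef]; module
  have hzv : z - v = (u - v) - β⁻¹ • (G u - G v) := by rw [hzdef]; module
  have e1 : ⟪G u, z - u⟫ = -(β⁻¹ * ⟪G u, G u - G v⟫) := by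
    rw [hzu, inner_neg_right, real_inner_smul_right]
  have e2 : ‖z - u‖ ^ 2 = β⁻¹ ^ 2 * ‖G u - G v‖ ^ 2 := by
    rw [hzu, norm_neg, norm_smul, mul_pow, Real.norm_eq_abs, sq_abs]
  have e3 : ⟪G v, z - v⟫ = ⟪G v, u - v⟫ - β⁻¹ * ⟪G v, G u - G v⟫ := by
    rw [hzv, inner_sub_right, real_inner_smul_right]
  have e4 : ⟪G u, G u - G v⟫ - ⟪G v, G u - G v⟫ = ‖G u - G v‖ ^ 2 := by
    rw [← inner_sub_left, real_inner_self_eq_norm_sq]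
  rw [e1, e2] at h2
  rw [e3] at h1
  have e5 : β / 2 * (β⁻¹ ^ 2 * ‖G u - G v‖ ^ 2) = 1 / (2 * β) * ‖G u - G v‖ ^ 2 := by
    field_simp
  have e6 : β⁻¹ * ⟪G u, G u - G v⟫ - β⁻¹ * ⟪G v, G u - G v⟫ = β⁻¹ * ‖G u - G v‖ ^ 2 := by
    rw [← mul_sub, e4]
  have e7 : β⁻¹ * ‖G u - G v‖ ^ 2 = 2 * (1 / (2 * β) * ‖G u - G v‖ ^ 2) := by
    field_simp
  linarith

lemma aux_coco {E : Type*} [NormedAddCommGroup E] [InnerProductSpace ℝ E]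
    {g : E → ℝ} {G : E → E} {β : ℝ} (hβ : 0 < β)
    (hs : ∀ u v, |g u - g v - ⟪G v, u - v⟫| ≤ β / 2 * ‖u - v‖ ^ 2)
    (hcg : ∀ u v, g v + ⟪G v, u - v⟫ ≤ g u)
    (u v : E) :
    1 / β * ‖G u - G v‖ ^ 2 ≤ ⟪G u - G v, u - v⟫ := by
  have h1 := aux_coco_half hβ hs hcg u v
  have h2 := aux_coco_half hβ hs hcg v u
  have e1 : ‖G v - G u‖ = ‖G u - G v‖ := norm_sub_rev _ _
  rw [e1] at h2
  have e2 : ⟪G u - G v, u - v⟫ = ⟪G u, u - v⟫ - ⟪G v, u - v⟫ := inner_sub_left _ _ _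
  have e3 : ⟪G u, v - u⟫ = -⟪G u, u - v⟫ := by
    rw [show v - u = -(u - v) by module, inner_neg_right]
  have e4 : 2 * (1 / (2 * β)) = 1 / β := by field_simp
  nlinarith [h1, h2]

lemma aux_hasGradient_avg {d n : ℕ} (c : ℝ) (f : Fin n → EuclideanSpace ℝ (Fin d) → ℝ)
    (hdiff : ∀ i, Differentiable ℝ (f i)) (w : EuclideanSpace ℝ (Fin d)) :
    HasGradientAt (fun w => c * ∑ i, f i w) (c • ∑ i, gradient (f i) w) w := by
  have h : HasFDerivAt (fun w => ∑ i, f i w)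
      (∑ i, InnerProductSpace.toDual ℝ _ (gradient (f i) w)) w := by
    apply HasFDerivAt.fun_sum
    intro i _
    exact hasGradientAt_iff_hasFDerivAt.mp (hdiff i w).hasGradientAt
  have h2 := h.const_mul c
  rw [hasGradientAt_iff_hasFDerivAt]
  convert h2 using 1
  · rfl
  simp [_root_.map_smul, map_sum]

lemma aux_sq_le (a b : ℝ) (ha : 0 ≤ a) (hb : 0 ≤ b) (h : a ^ 2 ≤ b ^ 2) : a ≤ b := by
  nlinarith

lemma aux_scalar1 (a D ip η β : ℝ) (hη : 0 < η) (hβ : 0 < β) (hηβ : η ≤ 1 / β)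
    (hco : 1 / β * D ^ 2 ≤ ip) (hD : 0 ≤ D) :
    a ^ 2 - 2 * η * ip + η ^ 2 * D ^ 2 ≤ a ^ 2 := by
  nlinarith [mul_le_mul_of_nonneg_right hηβ (mul_nonneg hη.le (sq_nonneg D)),
    mul_le_mul_of_nonneg_left hco (by positivity : (0:ℝ) ≤ 2 * η),
    mul_nonneg (mul_nonneg hη.le (le_of_lt (one_div_pos.mpr hβ))) (sq_nonneg D)]

lemma aux_final (x a η L nn : ℝ) (hx : 0 ≤ x) (ha : 0 ≤ a) (hη : 0 < η) (hL : 0 ≤ L)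
    (hnn : 0 < nn) (h : x ≤ a + 2 * η * L / nn) :
    x ^ 2 ≤ a ^ 2 + 4 * η * L / nn * a + 8 * η ^ 2 * L ^ 2 / nn ^ 2 := by
  have h2 : x ^ 2 ≤ (a + 2 * η * L / nn) ^ 2 := pow_le_pow_left₀ hx h 2
  have h3 : (a + 2 * η * L / nn) ^ 2 = a ^ 2 + 4 * η * L / nn * a + 4 * (η ^ 2 * L ^ 2 / nn ^ 2) := by
    field_simp
    ring
  have h4 : 0 ≤ η ^ 2 * L ^ 2 / nn ^ 2 := by positivity
  rw [show 8 * η ^ 2 * L ^ 2 / nn ^ 2 = 8 * (η ^ 2 * L ^ 2 / nn ^ 2) from by ring]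
  linarith

/-- One-step sensitivity recursion for gradient descent on convex smooth losses. -/
theorem one_step_sensitivity_convex
    (d n : ℕ) (hn : 0 < n) (β L η : ℝ)
    (f f' : Fin n → EuclideanSpace ℝ (Fin d) → ℝ)
    (hdiff : ∀ i, Differentiable ℝ (f i)) (hdiff' : ∀ i, Differentiable ℝ (f' i))
    (hneigh : ∀ i : Fin n, (i : ℕ) ≠ n - 1 → f i = f' i)
    (hconv : ∀ i, ConvexOn ℝ Set.univ (f i)) (hconv' : ∀ i, ConvexOn ℝ Set.univ (f' i))
    (hsmooth : ∀ i u v, |f i u - f i v - ⟪gradient (f i) v, u - v⟫| ≤ β / 2 * ‖u - v‖ ^ 2)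
    (hsmooth' : ∀ i u v, |f' i u - f' i v - ⟪gradient (f' i) v, u - v⟫| ≤ β / 2 * ‖u - v‖ ^ 2)
    (hlip : ∀ i u v, |f i u - f i v| ≤ L * ‖u - v‖)
    (hlip' : ∀ i u v, |f' i u - f' i v| ≤ L * ‖u - v‖)
    (hη : 0 < η) (hηβ : η ≤ 1 / β)
    (F F' : EuclideanSpace ℝ (Fin d) → ℝ)
    (hF : F = fun w => (1 / (n : ℝ)) * ∑ i, f i w)
    (hF' : F' = fun w => (1 / (n : ℝ)) * ∑ i, f' i w)
    (w v w' v' : EuclideanSpace ℝ (Fin d))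
    (hw' : w' = w - η • gradient F w) (hv' : v' = v - η • gradient F' v) :
    ‖w' - v'‖ ^ 2 ≤ ‖w - v‖ ^ 2 + 4 * η * L / n * ‖w - v‖ + 8 * η ^ 2 * L ^ 2 / n ^ 2 := by
  rcases Nat.eq_zero_or_pos d with hd | hd
  · subst hd
    have h1 : w' - v' = 0 := by rw [Subsingleton.elim w' v', sub_self]
    have h2 : w - v = 0 := by rw [Subsingleton.elim w v, sub_self]
    rw [h1, h2]
    simp only [norm_zero]
    have h8 : (0:ℝ) ≤ 8 * η ^ 2 * L ^ 2 / (n:ℝ) ^ 2 := by positivity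
    nlinarith
  -- basic positivity facts
  have hβ : 0 < β := by
    have : 0 < 1 / β := lt_of_lt_of_le hη hηβ
    exact one_div_pos.mp this
  set e : EuclideanSpace ℝ (Fin d) := EuclideanSpace.single (⟨0, hd⟩ : Fin d) (1 : ℝ) with he
  have hne : ‖e - 0‖ = 1 := by
    rw [sub_zero, he, EuclideanSpace.norm_single, norm_one]
  have i0 : Fin n := ⟨0, hn⟩
  have hL : 0 ≤ L := by
    have h := hlip i0 e 0
    rw [hne, mul_one] at h
    exact le_trans (abs_nonneg _) h
  have hnpos : (0:ℝ) < n := Nat.cast_pos.mpr hn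
  have hcn : (0:ℝ) ≤ 1 / n := by positivity
  -- gradients of F and F'
  have hGF : ∀ x, gradient F x = (1 / (n:ℝ)) • ∑ i, gradient (f i) x := by
    intro x
    rw [hF]
    exact (aux_hasGradient_avg (1 / (n:ℝ)) f hdiff x).gradient
  have hGF' : ∀ x, gradient F' x = (1 / (n:ℝ)) • ∑ i, gradient (f' i) x := by
    intro x
    rw [hF']
    exact (aux_hasGradient_avg (1 / (n:ℝ)) f' hdiff' x).gradient
  -- smoothness of F
  have hsF : ∀ u x, |F u - F x - ⟪gradient F x, u - x⟫| ≤ β / 2 * ‖u - x‖ ^ 2 := by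
    intro u x
    have hrw : F u - F x - ⟪gradient F x, u - x⟫
        = (1 / (n:ℝ)) * ∑ i, (f i u - f i x - ⟪gradient (f i) x, u - x⟫) := by
      rw [hGF, hF, real_inner_smul_left, sum_inner]
      simp only [Finset.sum_sub_distrib, mul_sub]
    rw [hrw, abs_mul, abs_of_nonneg hcn]
    calc (1 / (n:ℝ)) * |∑ i, (f i u - f i x - ⟪gradient (f i) x, u - x⟫)|
        ≤ (1 / (n:ℝ)) * ∑ i, |f i u - f i x - ⟪gradient (f i) x, u - x⟫| :=
          mul_le_mul_of_nonneg_left (Finset.abs_sum_le_sum_abs _ _) hcn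
      _ ≤ (1 / (n:ℝ)) * ∑ _i : Fin n, (β / 2 * ‖u - x‖ ^ 2) :=
          mul_le_mul_of_nonneg_left (Finset.sum_le_sum fun i _ => hsmooth i u x) hcn
      _ = β / 2 * ‖u - x‖ ^ 2 := by
          rw [Finset.sum_const, Finset.card_univ, Fintype.card_fin, nsmul_eq_mul]
          field_simp
  -- convexity gradient inequality for F
  have hcgF : ∀ u x, F x + ⟪gradient F x, u - x⟫ ≤ F u := by
    intro u x
    have hi : ∀ i : Fin n, f i x + ⟪gradient (f i) x, u - x⟫ ≤ f i u :=
      fun i => aux_convex_grad hβ.le (hconv i) (hsmooth i) u x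
    have hrw : F x + ⟪gradient F x, u - x⟫
        = (1 / (n:ℝ)) * ∑ i, (f i x + ⟪gradient (f i) x, u - x⟫) := by
      rw [hGF, hF, real_inner_smul_left, sum_inner]
      simp only [Finset.sum_add_distrib, mul_add]
    rw [hrw, hF]
    exact mul_le_mul_of_nonneg_left (Finset.sum_le_sum fun i _ => hi i) hcn
  -- nonexpansiveness of the gradient step on F
  have hco := aux_coco hβ hsF hcgF w v
  have key : ‖(w - η • gradient F w) - (v - η • gradient F v)‖ ≤ ‖w - v‖ := by
    have expand : (w - η • gradient F w) - (v - η • gradient F v)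
        = (w - v) - η • (gradient F w - gradient F v) := by module
    have hs2 : ‖(w - v) - η • (gradient F w - gradient F v)‖ ^ 2
        = ‖w - v‖ ^ 2 - 2 * η * ⟪gradient F w - gradient F v, w - v⟫
          + η ^ 2 * ‖gradient F w - gradient F v‖ ^ 2 := by
      rw [norm_sub_sq_real, real_inner_smul_right, norm_smul, mul_pow,
        Real.norm_eq_abs, sq_abs,
        ← real_inner_comm (w - v) (gradient F w - gradient F v)]
      ring
    have hsq : ‖(w - v) - η • (gradient F w - gradient F v)‖ ^ 2 ≤ ‖w - v‖ ^ 2 := by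
      rw [hs2]
      exact aux_scalar1 _ _ _ _ _ hη hβ hηβ hco (norm_nonneg _)
    rw [expand]
    exact aux_sq_le _ _ (norm_nonneg _) (norm_nonneg _) hsq
  -- gradient perturbation bound
  set j : Fin n := ⟨n - 1, by omega⟩ with hj
  have hpert : gradient F v - gradient F' v
      = (1 / (n:ℝ)) • (gradient (f j) v - gradient (f' j) v) := by
    rw [hGF, hGF', ← smul_sub, ← Finset.sum_sub_distrib]
    congr 1
    rw [Finset.sum_eq_single j]
    · intro i _ hij
      have : f i = f' i := hneigh i (by
        intro hcon
        exact hij (Fin.ext (by rw [hcon])))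
      rw [this, sub_self]
    · intro h; exact absurd (Finset.mem_univ j) h
  have hgn : ∀ i : Fin n, ∀ x, ‖gradient (f i) x‖ ≤ L :=
    fun i x => aux_grad_norm hβ.le hL (hsmooth i) (hlip i) x
  have hgn' : ∀ i : Fin n, ∀ x, ‖gradient (f' i) x‖ ≤ L :=
    fun i x => aux_grad_norm hβ.le hL (hsmooth' i) (hlip' i) x
  have hpn : ‖gradient F v - gradient F' v‖ ≤ 2 * L / n := by
    rw [hpert, norm_smul, Real.norm_eq_abs, abs_of_nonneg hcn]
    calc (1 / (n:ℝ)) * ‖gradient (f j) v - gradient (f' j) v‖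
        ≤ (1 / (n:ℝ)) * (‖gradient (f j) v‖ + ‖gradient (f' j) v‖) :=
          mul_le_mul_of_nonneg_left (norm_sub_le _ _) hcn
      _ ≤ (1 / (n:ℝ)) * (L + L) :=
          mul_le_mul_of_nonneg_left (add_le_add (hgn j v) (hgn' j v)) hcn
      _ = 2 * L / n := by ring
  -- triangle inequality
  have htri : ‖w' - v'‖ ≤ ‖w - v‖ + 2 * η * L / n := by
    have hsplit : w' - v' = ((w - η • gradient F w) - (v - η • gradient F v))
        - η • (gradient F v - gradient F' v) := by
      rw [hw', hv']; module
    calc ‖w' - v'‖ ≤ ‖(w - η • gradient F w) - (v - η • gradient F v)‖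
          + ‖η • (gradient F v - gradient F' v)‖ := by rw [hsplit]; exact norm_sub_le _ _
      _ ≤ ‖w - v‖ + 2 * η * L / n := by
          have h1 : ‖η • (gradient F v - gradient F' v)‖ ≤ η * (2 * L / n) := by
            rw [norm_smul, Real.norm_eq_abs, abs_of_pos hη]
            exact mul_le_mul_of_nonneg_left hpn hη.le
          have h2 : η * (2 * L / n) = 2 * η * L / n := by ring
          linarith [key]
  exact aux_final _ _ _ _ _ (norm_nonneg _) (norm_nonneg _) hη hL hnpos htri
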